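/- Let G₁ and G₂ be kernels on R^n_+, each having the reflection properties (P1)–(P3) for every λ > 0, and define the composed kernel G(x, y) = ∫_{R^n_+} G₁(x, z) G₂(z, y) dz, assumed finite for all x ≠ y in R^n_+. Then G has property (P3): for every λ > 0, every x ∈ Σ_λ, and every y ∈ R^n_+ with y_n ≥ λ and y ≠ x^λ, one has G(x^λ, y) > G(x, y) and G(y, x^λ) > G(y, x). -/

import Mathlib

open MeasureTheory Filter Set Metric
open scoped ENNReal

noncomputable section

variable {n : ℕ}

/-- Reflection of `x` about the hyperplane `x i = lam`. -/
def reflect (i : Fin n) (lam : ℝ) (x : EuclideanSpace ℝ (Fin n)) :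
    EuclideanSpace ℝ (Fin n) :=
  WithLp.toLp 2 (Function.update x i (2 * lam - x i))

/-- The half space `R^n_+ = {x : x i > 0}` (with `i` the last coordinate). -/
def halfSpace (i : Fin n) : Set (EuclideanSpace ℝ (Fin n)) := {x | 0 < x i}

/-- `Σ_λ = {x ∈ R^n_+ : 0 < x i < λ}`. -/
def sigmaSlab (i : Fin n) (lam : ℝ) : Set (EuclideanSpace ℝ (Fin n)) :=
  {x | 0 < x i ∧ x i < lam}

/-- Property (P1) of a kernel. -/
def PropP1 (i : Fin n) (K : EuclideanSpace ℝ (Fin n) → EuclideanSpace ℝ (Fin n) → ℝ) : Prop :=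
  ∀ lam > (0 : ℝ), ∀ x ∈ sigmaSlab i lam, ∀ y ∈ sigmaSlab i lam, x ≠ y →
    max (K (reflect i lam x) y) (K x (reflect i lam y)) <
      K (reflect i lam x) (reflect i lam y)

/-- Property (P2) of a kernel. -/
def PropP2 (i : Fin n) (K : EuclideanSpace ℝ (Fin n) → EuclideanSpace ℝ (Fin n) → ℝ) : Prop :=
  ∀ lam > (0 : ℝ), ∀ x ∈ sigmaSlab i lam, ∀ y ∈ sigmaSlab i lam, x ≠ y →
    |K (reflect i lam x) y - K x (reflect i lam y)| <
      K (reflect i lam x) (reflect i lam y) - K x y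

/-- Property (P3) of a kernel. -/
def PropP3 (i : Fin n) (K : EuclideanSpace ℝ (Fin n) → EuclideanSpace ℝ (Fin n) → ℝ) : Prop :=
  ∀ lam > (0 : ℝ), ∀ x ∈ sigmaSlab i lam, ∀ y : EuclideanSpace ℝ (Fin n),
    0 < y i → lam ≤ y i → y ≠ reflect i lam x →
      K x y < K (reflect i lam x) y ∧ K y x < K y (reflect i lam x)

/-- A kernel has the reflection properties (P1)-(P3). -/
def HasReflProps (i : Fin n) (K : EuclideanSpace ℝ (Fin n) → EuclideanSpace ℝ (Fin n) → ℝ) :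
    Prop :=
  PropP1 i K ∧ PropP2 i K ∧ PropP3 i K

/-! ### Auxiliary lemmas -/

lemma reflect_apply_self (i : Fin n) (lam : ℝ) (x : EuclideanSpace ℝ (Fin n)) :
    reflect i lam x i = 2 * lam - x i := by
  simp [reflect]

lemma reflect_invol (i : Fin n) (lam : ℝ) (x : EuclideanSpace ℝ (Fin n)) :
    reflect i lam (reflect i lam x) = x := by
  ext j
  by_cases h : j = i
  · subst h; simp [reflect]
  · simp [reflect, Function.update_apply, h]

lemma measurePreserving_reflect (i : Fin n) (lam : ℝ) :
    MeasurePreserving (reflect i lam)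
      (volume : Measure (EuclideanSpace ℝ (Fin n))) volume := by
  have e := EuclideanSpace.volume_preserving_symm_measurableEquiv_toLp (Fin n)
  have hg : MeasurePreserving
      (fun (a : Fin n → ℝ) (j : Fin n) =>
        (if j = i then (fun t : ℝ => 2 * lam - t) else id) (a j)) volume volume := by
    apply volume_preserving_pi
    intro j
    by_cases h : j = i
    · simpa [h] using Measure.measurePreserving_sub_left (volume : Measure ℝ) (2 * lam)
    · simpa [h] using MeasurePreserving.id (volume : Measure ℝ)
  have hfun : reflect i lam =
      (⇑((MeasurableEquiv.toLp 2 (Fin n → ℝ)).symm).symm) ∘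
        (fun (a : Fin n → ℝ) (j : Fin n) =>
          (if j = i then (fun t : ℝ => 2 * lam - t) else id) (a j)) ∘
        ⇑((MeasurableEquiv.toLp 2 (Fin n → ℝ)).symm) := by
    funext x
    ext j
    by_cases h : j = i
    · subst h
      simp [reflect, MeasurableEquiv.coe_toLp_symm,
        MeasurableEquiv.coe_toLp]
    · simp [reflect, Function.update_apply, h, MeasurableEquiv.coe_toLp_symm,
        MeasurableEquiv.coe_toLp]
  rw [hfun]
  exact (e.symm _).comp (hg.comp e)

/-- Reflection as a measurable equivalence. -/
def reflectEquiv (i : Fin n) (lam : ℝ) :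
    EuclideanSpace ℝ (Fin n) ≃ᵐ EuclideanSpace ℝ (Fin n) where
  toFun := reflect i lam
  invFun := reflect i lam
  left_inv := reflect_invol i lam
  right_inv := reflect_invol i lam
  measurable_toFun := (measurePreserving_reflect i lam).measurable
  measurable_invFun := (measurePreserving_reflect i lam).measurable

lemma measurableEmbedding_reflect (i : Fin n) (lam : ℝ) :
    MeasurableEmbedding (reflect i lam) :=
  (reflectEquiv i lam).measurableEmbedding

lemma measurable_eval (i : Fin n) :
    Measurable (fun z : EuclideanSpace ℝ (Fin n) => z i) :=
  (measurable_pi_apply i).comp ((MeasurableEquiv.toLp 2 (Fin n → ℝ)).symm).measurable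

lemma hyperplane_null (i : Fin n) (c : ℝ) :
    volume {z : EuclideanSpace ℝ (Fin n) | z i = c} = 0 := by
  have e := EuclideanSpace.volume_preserving_symm_measurableEquiv_toLp (Fin n)
  have hpi : (volume : Measure (Fin n → ℝ)) {f | f i = c} = 0 := by
    rw [show (volume : Measure (Fin n → ℝ)) = Measure.pi fun _ => volume from volume_pi]
    exact Measure.pi_hyperplane (fun _ => (volume : Measure ℝ)) i c
  have hms : NullMeasurableSet {f : Fin n → ℝ | f i = c} volume :=
    (measurableSet_eq_fun (measurable_pi_apply i) measurable_const).nullMeasurableSet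
  calc volume {z : EuclideanSpace ℝ (Fin n) | z i = c}
      = volume (⇑((MeasurableEquiv.toLp 2 (Fin n → ℝ)).symm) ⁻¹' {f : Fin n → ℝ | f i = c}) := rfl
    _ = volume {f : Fin n → ℝ | f i = c} := e.measure_preimage hms
    _ = 0 := hpi

lemma point_null (i : Fin n) (p : EuclideanSpace ℝ (Fin n)) :
    volume ({p} : Set (EuclideanSpace ℝ (Fin n))) = 0 := by
  refine measure_mono_null ?_ (hyperplane_null i (p i))
  intro z hz
  simp only [mem_singleton_iff] at hz
  subst hz; rfl

lemma continuous_eval (i : Fin n) :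
    Continuous (fun z : EuclideanSpace ℝ (Fin n) => z i) :=
  (EuclideanSpace.proj (𝕜 := ℝ) i).continuous

/-- The key positivity lemma: if `φ` is integrable on the half-space, nonnegative above the
plane (off a point `p`), and `φ z + φ (z^λ)` is positive on the slab (off two points), then
the integral of `φ` over the half-space is positive. -/
lemma key_pos (i : Fin n) {lam : ℝ} (hlam : 0 < lam)
    (φ : EuclideanSpace ℝ (Fin n) → ℝ)
    (hφ : IntegrableOn φ (halfSpace i))
    (p q1 q2 w : EuclideanSpace ℝ (Fin n)) (hw : w ∈ sigmaSlab i lam)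
    (hB : ∀ z : EuclideanSpace ℝ (Fin n), 0 < z i → lam ≤ z i → z ≠ p → 0 ≤ φ z)
    (hA : ∀ z ∈ sigmaSlab i lam, z ≠ q1 → z ≠ q2 → 0 < φ z + φ (reflect i lam z)) :
    0 < ∫ z in halfSpace i, φ z := by
  set A : Set (EuclideanSpace ℝ (Fin n)) := sigmaSlab i lam with hAdef
  set B1 : Set (EuclideanSpace ℝ (Fin n)) := {z | lam < z i ∧ z i < 2 * lam} with hB1def
  set B2 : Set (EuclideanSpace ℝ (Fin n)) := {z | 2 * lam < z i} with hB2def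
  have hAm : MeasurableSet A :=
    (measurable_eval i measurableSet_Ioo : MeasurableSet ((fun z : EuclideanSpace ℝ (Fin n) => z i) ⁻¹' Ioo 0 lam))
  have hB1m : MeasurableSet B1 :=
    (measurable_eval i measurableSet_Ioo :
      MeasurableSet ((fun z : EuclideanSpace ℝ (Fin n) => z i) ⁻¹' Ioo lam (2 * lam)))
  have hB2m : MeasurableSet B2 :=
    (measurable_eval i measurableSet_Ioi :
      MeasurableSet ((fun z : EuclideanSpace ℝ (Fin n) => z i) ⁻¹' Ioi (2 * lam)))
  have hAsub : A ⊆ halfSpace i := fun z hz => hz.1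
  have hB1sub : B1 ⊆ halfSpace i := fun z hz => lt_trans hlam hz.1
  have hB2sub : B2 ⊆ halfSpace i := fun z hz =>
    lt_trans hlam (lt_trans (by linarith) hz)
  -- the half space is a.e. equal to `A ∪ B1 ∪ B2`
  have hplanes := measure_union_null (hyperplane_null i lam) (hyperplane_null i (2 * lam))
  have hae : halfSpace i =ᵐ[volume] ((A ∪ B1 ∪ B2 : Set (EuclideanSpace ℝ (Fin n)))) := by
    rw [ae_eq_set]
    constructor
    · refine measure_mono_null ?_ hplanes
      intro z hz
      obtain ⟨hz1, hz2⟩ := hz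
      simp only [mem_union, mem_setOf_eq, not_or, hAdef, hB1def, hB2def, sigmaSlab] at hz2 ⊢
      have h0 : 0 < z i := hz1
      by_contra hcon
      push_neg at hcon
      obtain ⟨hne1, hne2⟩ := hcon
      rcases lt_trichotomy (z i) lam with h | h | h
      · exact hz2.1.1 ⟨h0, h⟩
      · exact hne1 h
      · rcases lt_trichotomy (z i) (2 * lam) with h' | h' | h'
        · exact hz2.1.2 ⟨h, h'⟩
        · exact hne2 h'
        · exact hz2.2 h'
    · have : (A ∪ B1 ∪ B2) \ halfSpace i = ∅ := by
        apply diff_eq_empty.mpr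
        intro z hz
        rcases hz with (hz | hz) | hz
        · exact hAsub hz
        · exact hB1sub hz
        · exact hB2sub hz
      rw [this]; simp
  -- integrability on the pieces
  have hφA : IntegrableOn φ A := hφ.mono_set hAsub
  have hφB1 : IntegrableOn φ B1 := hφ.mono_set hB1sub
  have hφB2 : IntegrableOn φ B2 := hφ.mono_set hB2sub
  -- split the integral
  have hsplit : ∫ z in halfSpace i, φ z =
      (∫ z in A, φ z) + (∫ z in B1, φ z) + (∫ z in B2, φ z) := by
    rw [setIntegral_congr_set hae]
    rw [setIntegral_union ?_ hB2m (hφA.union hφB1) hφB2,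
      setIntegral_union ?_ hB1m hφA hφB1]
    · rw [disjoint_left]
      intro z hz1 hz2
      exact absurd hz2.1 (not_lt.mpr (le_of_lt hz1.2))
    · rw [disjoint_left]
      intro z hz1 hz2
      rcases hz1 with hz1 | hz1
      · exact absurd hz2 (not_lt.mpr (le_of_lt (lt_trans hz1.2 (by linarith))))
      · exact absurd hz2 (not_lt.mpr (le_of_lt hz1.2))
  -- integral over B2 is nonnegative
  have hB2nonneg : 0 ≤ ∫ z in B2, φ z := by
    apply setIntegral_nonneg_ae hB2m
    filter_upwards [compl_mem_ae_iff.2 (point_null i p)] with z hz hzB2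
    have h2 : 2 * lam < z i := hzB2
    exact hB z (by linarith) (by linarith) (by simpa using hz)
  -- change of variables on B1
  have hpre : reflect i lam ⁻¹' B1 = A := by
    ext z
    simp only [mem_preimage, hB1def, hAdef, mem_setOf_eq, sigmaSlab, reflect_apply_self]
    constructor
    · rintro ⟨h1, h2⟩; constructor <;> linarith
    · rintro ⟨h1, h2⟩; constructor <;> linarith
  have hcov : ∫ z in A, φ (reflect i lam z) = ∫ z in B1, φ z := by
    rw [← hpre]
    exact (measurePreserving_reflect i lam).setIntegral_preimage_emb
      (measurableEmbedding_reflect i lam) φ B1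
  have hφRA : IntegrableOn (fun z => φ (reflect i lam z)) A := by
    have key : Integrable (φ ∘ reflect i lam) (volume.restrict (reflect i lam ⁻¹' B1)) ↔
        Integrable φ (volume.restrict B1) :=
      ((measurePreserving_reflect i lam).restrict_preimage_emb
        (measurableEmbedding_reflect i lam) B1).integrable_comp_emb
        (measurableEmbedding_reflect i lam)
    rw [hpre] at key
    exact key.mpr hφB1
  -- integral over A ∪ B1 is positive
  have hApos : 0 < ∫ z in A, (φ z + φ (reflect i lam z)) := by
    rw [setIntegral_pos_iff_support_of_nonneg_ae]
    · -- positive measure of the support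
      have hnullpts : volume ({q1} ∪ {q2} : Set (EuclideanSpace ℝ (Fin n))) = 0 :=
        measure_union_null (point_null i q1) (point_null i q2)
      have hsub : A \ ({q1} ∪ {q2}) ⊆
          Function.support (fun z => φ z + φ (reflect i lam z)) ∩ A := by
        intro z hz
        obtain ⟨hzA, hzne⟩ := hz
        simp only [mem_union, mem_singleton_iff, not_or] at hzne
        refine ⟨?_, hzA⟩
        exact ne_of_gt (hA z hzA hzne.1 hzne.2)
      calc (0 : ℝ≥0∞) < volume A := by
            have hopen : IsOpen A := by
              have : A = (fun z : EuclideanSpace ℝ (Fin n) => z i) ⁻¹' Ioo 0 lam := rfl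
              rw [this]
              exact isOpen_Ioo.preimage (continuous_eval i)
            exact hopen.measure_pos volume ⟨w, hw⟩
        _ = volume (A \ ({q1} ∪ {q2})) := (measure_diff_null hnullpts).symm
        _ ≤ volume (Function.support (fun z => φ z + φ (reflect i lam z)) ∩ A) :=
            measure_mono hsub
    · -- a.e. nonnegativity
      have hnullpts : volume ({q1} ∪ {q2} : Set (EuclideanSpace ℝ (Fin n))) = 0 :=
        measure_union_null (point_null i q1) (point_null i q2)
      filter_upwards [ae_restrict_mem hAm, ae_restrict_of_ae (compl_mem_ae_iff.2 hnullpts)]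
        with z hzA hzne
      simp only [mem_union, mem_singleton_iff, not_or, mem_compl_iff] at hzne
      exact le_of_lt (hA z hzA hzne.1 hzne.2)
    · exact hφA.add hφRA
  have hAB1 : ∫ z in A, (φ z + φ (reflect i lam z)) =
      (∫ z in A, φ z) + (∫ z in B1, φ z) := by
    rw [integral_add hφA hφRA, hcov]
  rw [hsplit]
  rw [hAB1] at hApos
  linarith

/-- the composed kernel `G(x,y) = ∫_{R^n_+} G₁(x,z) G₂(z,y) dz`
inherits property (P3). -/
theorem composed_kernel_P3
    (n : ℕ) (i : Fin n) (hi : (i : ℕ) = n - 1) (hn : 2 ≤ n)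
    (G₁ G₂ : EuclideanSpace ℝ (Fin n) → EuclideanSpace ℝ (Fin n) → ℝ)
    (h₁pos : ∀ x ∈ halfSpace i, ∀ y ∈ halfSpace i, 0 < G₁ x y)
    (h₂pos : ∀ x ∈ halfSpace i, ∀ y ∈ halfSpace i, 0 < G₂ x y)
    (h₁ : HasReflProps i G₁) (h₂ : HasReflProps i G₂)
    (hint : ∀ x ∈ halfSpace i, ∀ y ∈ halfSpace i, x ≠ y →
      IntegrableOn (fun z => G₁ x z * G₂ z y) (halfSpace i)) :
    PropP3 i (fun x y => ∫ z in halfSpace i, G₁ x z * G₂ z y) := by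
  intro lam hlam x hx y hy0 hyl hyne
  set x' : EuclideanSpace ℝ (Fin n) := reflect i lam x with hx'def
  have hx'i : x' i = 2 * lam - x i := reflect_apply_self i lam x
  have hxh : x ∈ halfSpace i := hx.1
  have hyh : y ∈ halfSpace i := hy0
  have hx'h : x' ∈ halfSpace i := by
    show 0 < x' i
    rw [hx'i]
    have := hx.2; linarith
  have hxy : x ≠ y := by
    intro h
    rw [h] at hx
    exact absurd hyl (not_le.mpr hx.2)
  have hx'y : x' ≠ y := fun h => hyne h.symm
  -- y ≠ Rz for z in the slab with z ≠ reflect y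
  have hyRz : ∀ z : EuclideanSpace ℝ (Fin n), z ≠ reflect i lam y → y ≠ reflect i lam z := by
    intro z hz h
    apply hz
    rw [h, reflect_invol]
  constructor
  · -- first inequality
    have If := hint x' hx'h y hyh hx'y
    have Ig := hint x hxh y hyh hxy
    show (∫ z in halfSpace i, G₁ x z * G₂ z y) < ∫ z in halfSpace i, G₁ x' z * G₂ z y
    rw [← sub_pos, ← integral_sub If Ig]
    apply key_pos i hlam _ ((If.sub Ig)) x' x (reflect i lam y) x hx
    · -- above the plane
      intro z hz0 hzl hzp
      simp only [Pi.sub_apply]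
      show 0 ≤ G₁ x' z * G₂ z y - G₁ x z * G₂ z y
      have h3 := (h₁.2.2 lam hlam x hx z hz0 hzl hzp).1
      have hc : 0 < G₂ z y := h₂pos z hz0 y hyh
      have : G₁ x z * G₂ z y ≤ G₁ x' z * G₂ z y := by
        apply mul_le_mul_of_nonneg_right (le_of_lt h3) (le_of_lt hc)
      linarith
    · -- on the slab
      intro z hz hq1 hq2
      simp only [Pi.sub_apply]
      show 0 < (G₁ x' z * G₂ z y - G₁ x z * G₂ z y) +
        (G₁ x' (reflect i lam z) * G₂ (reflect i lam z) y -
          G₁ x (reflect i lam z) * G₂ (reflect i lam z) y)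
      set Rz : EuclideanSpace ℝ (Fin n) := reflect i lam z with hRzdef
      have hzh : z ∈ halfSpace i := hz.1
      have hRzh : Rz ∈ halfSpace i := by
        show 0 < Rz i
        rw [hRzdef, reflect_apply_self]
        have := hz.2; linarith
      have hxz : x ≠ z := fun h => hq1 h.symm
      have hP2 := h₁.2.1 lam hlam x hx z hz hxz
      have hP1 := h₁.1 lam hlam x hx z hz hxz
      have hP3 := (h₂.2.2 lam hlam z hz y hy0 hyl (hyRz z hq2)).1
      have hs : 0 < G₂ z y := h₂pos z hzh y hyh
      rw [abs_lt] at hP2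
      have hcb : G₁ x Rz < G₁ x' Rz :=
        lt_of_le_of_lt (le_max_right (G₁ x' z) (G₁ x Rz)) hP1
      nlinarith [mul_pos (show (0:ℝ) < (G₁ x' z - G₁ x z) + (G₁ x' Rz - G₁ x Rz) by linarith) hs,
        mul_pos (sub_pos.mpr hcb) (sub_pos.mpr hP3)]
  · -- second inequality
    have If := hint y hyh x' hx'h hyne
    have Ig := hint y hyh x hxh hxy.symm
    show (∫ z in halfSpace i, G₁ y z * G₂ z x) < ∫ z in halfSpace i, G₁ y z * G₂ z x'
    rw [← sub_pos, ← integral_sub If Ig]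
    apply key_pos i hlam _ ((If.sub Ig)) x' x (reflect i lam y) x hx
    · intro z hz0 hzl hzp
      simp only [Pi.sub_apply]
      show 0 ≤ G₁ y z * G₂ z x' - G₁ y z * G₂ z x
      have h3 := (h₂.2.2 lam hlam x hx z hz0 hzl hzp).2
      have hc : 0 < G₁ y z := h₁pos y hyh z hz0
      have : G₁ y z * G₂ z x ≤ G₁ y z * G₂ z x' := by
        apply mul_le_mul_of_nonneg_left (le_of_lt h3) (le_of_lt hc)
      linarith
    · intro z hz hq1 hq2
      simp only [Pi.sub_apply]
      show 0 < (G₁ y z * G₂ z x' - G₁ y z * G₂ z x) +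
        (G₁ y (reflect i lam z) * G₂ (reflect i lam z) x' -
          G₁ y (reflect i lam z) * G₂ (reflect i lam z) x)
      set Rz : EuclideanSpace ℝ (Fin n) := reflect i lam z with hRzdef
      have hzh : z ∈ halfSpace i := hz.1
      have hRzh : Rz ∈ halfSpace i := by
        show 0 < Rz i
        rw [hRzdef, reflect_apply_self]
        have := hz.2; linarith
      have hzx : z ≠ x := hq1
      have hP2 := h₂.2.1 lam hlam z hz x hx hzx
      have hP1 := h₂.1 lam hlam z hz x hx hzx
      have hP3 := (h₁.2.2 lam hlam z hz y hy0 hyl (hyRz z hq2)).2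
      have hs : 0 < G₁ y z := h₁pos y hyh z hzh
      rw [abs_lt] at hP2
      have hca : G₂ Rz x < G₂ Rz x' :=
        lt_of_le_of_lt (le_max_left (G₂ Rz x) (G₂ z x')) hP1
      nlinarith [mul_pos (show (0:ℝ) < (G₂ z x' - G₂ z x) + (G₂ Rz x' - G₂ Rz x) by linarith) hs,
        mul_pos (sub_pos.mpr hca) (sub_pos.mpr hP3)]
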